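/- Fix m ≥ 1, and for a natural number k write k + 1 = 2^κ(2ρ - 1) with ρ ≥ 1. Then for all s, t with s < m ≤ t, the condition 'k ≥ 2^{s+t} implies the s-th binary digit of k is 1' holds, if and only if either κ ≥ m, or (κ < m and ρ ≤ 2^{m-1}). -/
import Mathlib


/-- E(m)-annihilation criterion. With k+1 = 2^κ(2ρ-1), ρ ≥ 1:
(∀ s t, s < m ≤ t, k ≥ 2^{s+t} → bit s of k is 1) iff κ ≥ m or (κ < m and ρ ≤ 2^{m-1}). -/
theorem stmt3 (m k κ ρ : ℕ) (hm : 1 ≤ m) (hρ : 1 ≤ ρ)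
    (hk : k + 1 = 2^κ * (2 * ρ - 1)) :
    (∀ s t : ℕ, s < m → m ≤ t → (2^(s+t) ≤ k → k.testBit s = true)) ↔
      (m ≤ κ ∨ (κ < m ∧ ρ ≤ 2^(m-1))) := by
  have hk' : k = 2 ^ (κ + 1) * (ρ - 1) + (2 ^ κ - 1) := by
    have e1 : 2 * ρ - 1 = 2 * (ρ - 1) + 1 := by omega
    rw [e1] at hk
    have e2 : 2 ^ κ * (2 * (ρ - 1) + 1) = 2 ^ (κ + 1) * (ρ - 1) + 2 ^ κ := by ring
    have hpos : 1 ≤ 2 ^ κ := Nat.one_le_two_pow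
    omega
  -- bits below κ are 1, bit κ is 0
  have hbit : ∀ s, s ≤ κ → k.testBit s = decide (s < κ) := by
    intro s hs
    rw [hk', Nat.testBit_two_pow_mul_add _ (by
      have : (1:ℕ) ≤ 2 ^ κ := Nat.one_le_two_pow
      have : 2 ^ κ < 2 ^ (κ + 1) := Nat.pow_lt_pow_succ (by norm_num)
      omega)]
    rw [if_pos (by omega), Nat.testBit_two_pow_sub_one]
  constructor
  · intro h
    by_contra hcon
    push_neg at hcon
    obtain ⟨hκm', hρ2⟩ := hcon
    have hρ2' : 2 ^ (m - 1) < ρ := hρ2 hκm'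
    -- then k ≥ 2^{κ+m}
    have hge : 2 ^ (κ + m) ≤ k := by
      have e3 : 2 ^ (κ + m) = 2 ^ (κ + 1) * 2 ^ (m - 1) := by
        rw [← pow_add]
        congr 1
        omega
      have e4 : 2 ^ (κ + 1) * 2 ^ (m - 1) ≤ 2 ^ (κ + 1) * (ρ - 1) :=
        Nat.mul_le_mul_left _ (by omega)
      omega
    have := h κ m hκm' (le_refl m) hge
    rw [hbit κ (le_refl κ)] at this
    simp at this
  · intro h s t hs ht hle
    rcases h with hmκ | ⟨hκm, hρ2⟩
    · rw [hbit s (by omega)]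
      simp only [decide_eq_true_eq]
      omega
    · -- k < 2^{κ+m} ≤ 2^{s+t} when s ≥ κ; for s < κ bit is 1
      rcases lt_or_ge s κ with hsκ | hsκ
      · rw [hbit s (by omega)]; simp [hsκ]
      · exfalso
        have h1 : 2 * ρ - 1 < 2 ^ m := by
          have : 2 ^ m = 2 * 2 ^ (m - 1) := by
            rw [← pow_succ']
            congr 1
            omega
          omega
        have h2 : k + 1 < 2 ^ κ * 2 ^ m :=
          lt_of_le_of_lt (le_of_eq hk)
            ((Nat.mul_lt_mul_left (Nat.two_pow_pos κ)).mpr h1)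
        have h3 : 2 ^ κ * 2 ^ m = 2 ^ (κ + m) := (pow_add 2 κ m).symm
        have h4 : 2 ^ (κ + m) ≤ 2 ^ (s + t) :=
          Nat.pow_le_pow_right (by norm_num) (by omega)
        omega
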